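/- Let q be a prime power, n ≥ 1, and N = q^{n+1} - 2q^n + 1. Then ∑_{θ∈F_q} (t+θ)^N = -1 in F_q[t]. -/
import Mathlib


open Polynomial

set_option linter.unusedVariables false

/-- For `N = q^{n+1} - 2q^n + 1`, `∑_{θ∈F_q} (t+θ)^N = -1` in `F_q[t]`. -/
theorem stmt_3 (p s q : ℕ) (hp : p.Prime) (hs : 0 < s) (hq : q = p ^ s)
    {F : Type} [Field F] [Fintype F] (hF : Fintype.card F = q)
    (n : ℕ) (hn : 1 ≤ n) :
    (∑ θ : F, (X + C θ) ^ (q ^ (n + 1) - 2 * q ^ n + 1)) = (-1 : F[X]) := by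
  classical
  open Finset in
  have hpf : Fact p.Prime := ⟨hp⟩
  have hq2 : 2 ≤ q := by rw [hq]; exact hp.two_le.trans (Nat.le_self_pow hs.ne' p)
  have hcharF : CharP F p := by
    obtain ⟨m, hr, hc⟩ := FiniteField.card F (ringChar F)
    have : p = ringChar F := by
      have : p ∣ ringChar F ^ (m : ℕ) := by rw [← hc, hF, hq]; exact dvd_pow_self p hs.ne'
      exact ((Nat.prime_dvd_prime_iff_eq hp hr).mp (hp.dvd_of_dvd_pow this))
    exact this ▸ ringChar.charP F
  have hN : q ^ (n + 1) - 2 * q ^ n + 1 = q ^ n * (q - 2) + 1 := by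
    rw [pow_succ, Nat.mul_sub, Nat.mul_comm (q ^ n) 2]
  have hθq : ∀ θ : F, θ ^ q ^ n = θ := fun θ => by rw [← hF]; exact FiniteField.pow_card_pow n θ
  have hfrob : ∀ θ : F, (X + C θ) ^ q ^ n = X ^ q ^ n + C θ := fun θ => by
    have h : q ^ n = p ^ (s * n) := by rw [hq, ← pow_mul]
    rw [h, add_pow_char_pow, ← h, ← map_pow, hθq]
  have key : ∀ θ : F, (X + C θ) ^ (q ^ (n + 1) - 2 * q ^ n + 1)
      = ∑ k ∈ range (q - 1), (X ^ q ^ n) ^ k * C (θ ^ (q - 2 - k)) * (Nat.choose (q-2) k : F[X]) * (X + C θ) := fun θ => by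
    rw [hN, pow_add, pow_mul, hfrob, pow_one, add_pow]
    have : q - 2 + 1 = q - 1 := by omega
    rw [this, Finset.sum_mul]
    simp [map_pow]
  simp only [key]
  rw [Finset.sum_comm]
  have hsum0 : ∀ i : ℕ, i < q - 1 → ∑ θ : F, θ ^ i = 0 := fun i hi => by
    rw [← hF] at hi; exact FiniteField.sum_pow_lt_card_sub_one F i hi
  have hsum1 : ∑ θ : F, θ ^ (q - 1) = -1 := by
    have h1 : ∀ θ : F, θ ^ (q - 1) = 1 - (if θ = 0 then 1 else 0) := fun θ => by
      split_ifs with h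
      · rw [h, zero_pow (by omega : q - 1 ≠ 0)]; ring
      · rw [← hF, FiniteField.pow_card_sub_one_eq_one θ h]; ring
    rw [Finset.sum_congr rfl fun θ _ => h1 θ, Finset.sum_sub_distrib,
      Finset.sum_ite_eq' univ (0 : F) (fun _ => (1 : F)), if_pos (mem_univ _),
      Finset.sum_const, card_univ, nsmul_eq_mul, hF]
    have : ((q : F)) = 0 := by rw [← hF]; exact FiniteField.cast_card_eq_zero F
    rw [this]; ring
  have inner : ∀ k ∈ range (q - 1),
      (∑ θ : F, (X ^ q ^ n) ^ k * C (θ ^ (q - 2 - k)) * (Nat.choose (q-2) k : F[X]) * (X + C θ))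
      = if k = 0 then -1 else 0 := by
    intro k hk
    rw [mem_range] at hk
    have hexp : ∀ θ : F, (X ^ q ^ n) ^ k * C (θ ^ (q - 2 - k)) * (Nat.choose (q-2) k : F[X]) * (X + C θ)
        = (X ^ q ^ n) ^ k * (Nat.choose (q-2) k : F[X]) * (C (θ ^ (q - 2 - k)) * X + C (θ ^ (q - 2 - k + 1))) := by
      intro θ; rw [pow_succ, map_mul]; ring
    rw [Finset.sum_congr rfl fun θ _ => hexp θ, ← Finset.mul_sum, Finset.sum_add_distrib,
      ← Finset.sum_mul, ← map_sum, ← map_sum, hsum0 (q - 2 - k) (by omega)]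
    rcases Nat.eq_zero_or_pos k with hk0 | hk0
    · subst hk0
      have : q - 2 - 0 + 1 = q - 1 := by omega
      rw [this, hsum1, if_pos rfl]
      simp
    · rw [if_neg (by omega), hsum0 (q - 2 - k + 1) (by omega)]
      simp
  rw [Finset.sum_congr rfl inner, Finset.sum_ite_eq' (range (q-1)) 0 (fun _ => (-1:F[X]))]
  · simp [mem_range, (by omega : 0 < q - 1)]
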